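/- Let d ≥ 1 and X = [0,1]^{4d}. There do not exist functions g₁, g₂ : ℝ^{4d−1} → ℝ such that for all x ∈ X, |g₁(x₁,…,x_{4d−1}) + g₂(x₂,…,x_{4d}) − x₁·x_{4d}| ≤ 1/8. -/
import Mathlib


/-- No sum of a function of the first `4d−1` coordinates and a function of the last
`4d−1` coordinates can uniformly approximate `h*(x) = x₁ · x_{4d}` on `[0,1]^{4d}`
within `1/8`. -/
theorem no_overlapping_separable_approx (d : ℕ) (hd : 1 ≤ d) :
    ¬ ∃ (g₁ g₂ : (Fin (4 * d - 1) → ℝ) → ℝ),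
      ∀ x : Fin (4 * d) → ℝ, (∀ i, x i ∈ Set.Icc (0 : ℝ) 1) →
        |g₁ (fun i => x ⟨i.1, by have := i.isLt; omega⟩)
          + g₂ (fun i => x ⟨i.1 + 1, by have := i.isLt; omega⟩)
          - x ⟨0, by omega⟩ * x ⟨4 * d - 1, by omega⟩| ≤ 1 / 8 := by
  rintro ⟨g₁, g₂, h⟩
  set X : ℝ → ℝ → Fin (4 * d) → ℝ :=
    fun a b i => if i.1 = 0 then a else if i.1 = 4 * d - 1 then b else 0 with hX
  set u : ℝ → Fin (4 * d - 1) → ℝ := fun a i => if i.1 = 0 then a else 0 with hu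
  set v : ℝ → Fin (4 * d - 1) → ℝ := fun b i => if i.1 + 1 = 4 * d - 1 then b else 0 with hv
  have key : ∀ a b : ℝ, a ∈ Set.Icc (0:ℝ) 1 → b ∈ Set.Icc (0:ℝ) 1 →
      |g₁ (u a) + g₂ (v b) - a * b| ≤ 1 / 8 := by
    intro a b ha hb
    have hmem : ∀ i, X a b i ∈ Set.Icc (0:ℝ) 1 := by
      intro i
      simp only [hX]
      split_ifs
      · exact ha
      · exact hb
      · exact ⟨le_refl 0, zero_le_one⟩
    have H := h (X a b) hmem
    have e1 : (fun i : Fin (4 * d - 1) => X a b ⟨i.1, by have := i.isLt; omega⟩) = u a := by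
      funext i
      have := i.isLt
      simp only [hX, hu]
      split_ifs with h1 h2
      · rfl
      · omega
      · rfl
    have e2 : (fun i : Fin (4 * d - 1) => X a b ⟨i.1 + 1, by have := i.isLt; omega⟩) = v b := by
      funext i
      simp only [hX, hv]
      rw [if_neg (by omega : ¬ i.1 + 1 = 0)]
    have e3 : X a b ⟨0, by omega⟩ = a := by simp [hX]
    have e4 : X a b ⟨4 * d - 1, by omega⟩ = b := by
      simp only [hX]
      split_ifs with h1
      · omega
      · rfl
    rw [e1, e2, e3, e4] at H
    exact H
  have h00 := key 0 0 ⟨le_refl 0, zero_le_one⟩ ⟨le_refl 0, zero_le_one⟩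
  have h01 := key 0 1 ⟨le_refl 0, zero_le_one⟩ ⟨zero_le_one, le_refl 1⟩
  have h10 := key 1 0 ⟨zero_le_one, le_refl 1⟩ ⟨le_refl 0, zero_le_one⟩
  have h11 := key 1 1 ⟨zero_le_one, le_refl 1⟩ ⟨zero_le_one, le_refl 1⟩
  rw [abs_le] at h00 h01 h10 h11
  obtain ⟨a00, b00⟩ := h00
  obtain ⟨a01, b01⟩ := h01
  obtain ⟨a10, b10⟩ := h10
  obtain ⟨a11, b11⟩ := h11
  norm_num at *
  linarith
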